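/- If there is ε > 0 such that g(n) = O(n^{a-ε}) as n → ∞, then f(n) = Θ(n^a) as n → ∞; that is, there are constants 0 < c1 ≤ c2 and N such that c1 · n^a ≤ f(n) ≤ c2 · n^a for all n ≥ N. -/

import Mathlib

open Filter Asymptotics

section Stmt7Aux

open Finset Real

/-- Taylor bound for the logarithm. -/
theorem stmt7_log_taylor_bound (x : ℝ) (h : |x| ≤ 1/2) : |Real.log (1+x) - x| ≤ 2 * x^2 := by
  have h1 : |(-x)| < 1 := by rw [abs_neg]; linarith [abs_nonneg x]
  have key := Real.abs_log_sub_add_sum_range_le h1 1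
  simp [Finset.sum_range_succ] at key
  have h3 : x^2 / (1 - |x|) ≤ x^2 / (1/2) :=
    div_le_div_of_nonneg_left (by positivity) (by norm_num) (by linarith)
  calc |Real.log (1+x) - x| = |-x + Real.log (1+x)| := by rw [neg_add_eq_sub]
    _ ≤ x^2 / (1-|x|) := key
    _ ≤ 2 * x^2 := by linarith

/-- The product `∏_{k=n0}^{n-1} (1 + a/k)`. -/
noncomputable def stmt7P (n0 : ℕ) (a : ℝ) (n : ℕ) : ℝ := ∏ k ∈ Finset.Ico n0 n, (1 + a / k)

theorem stmt7P_pos (n0 : ℕ) (a : ℝ) (hn0 : 1 ≤ n0) (ha : -(n0:ℝ) < a) (n : ℕ) :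
    0 < stmt7P n0 a n := by
  apply Finset.prod_pos
  intro k hk
  rw [Finset.mem_Ico] at hk
  have hk0 : (0:ℝ) < k := by
    have : 1 ≤ k := le_trans hn0 hk.1
    exact_mod_cast this
  have hkn0 : (n0:ℝ) ≤ k := by exact_mod_cast hk.1
  have : -1 < a / k := by
    rw [lt_div_iff₀ hk0]
    nlinarith
  linarith

theorem stmt7_log_P (n0 : ℕ) (a : ℝ) (hn0 : 1 ≤ n0) (ha : -(n0:ℝ) < a) :
    ∀ n, n0 ≤ n → Real.log (stmt7P n0 a n) =
      a * (Real.log n - Real.log n0) +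
        ∑ k ∈ Finset.Ico n0 n, (Real.log (1 + a / k) - a * Real.log (1 + 1 / (k:ℝ))) := by
  intro n hn
  induction n, hn using Nat.le_induction with
  | base => simp [stmt7P]
  | succ n hn ih =>
    have hnpos : (0:ℝ) < n := by
      have : 1 ≤ n := le_trans hn0 hn; exact_mod_cast this
    have hfac : (0:ℝ) < 1 + a / n := by
      have : -1 < a / n := by
        rw [lt_div_iff₀ hnpos]
        have : (n0:ℝ) ≤ n := by exact_mod_cast hn
        nlinarith
      linarith
    have hPsucc : stmt7P n0 a (n+1) = stmt7P n0 a n * (1 + a / n) :=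
      Finset.prod_Ico_succ_top hn _
    rw [hPsucc, Real.log_mul (stmt7P_pos n0 a hn0 ha n).ne' hfac.ne', ih,
      Finset.sum_Ico_succ_top hn]
    have hlog : Real.log (1 + 1/(n:ℝ)) = Real.log (n+1) - Real.log n := by
      rw [show (1:ℝ) + 1/n = ((n:ℝ)+1)/n by field_simp, Real.log_div (by positivity) hnpos.ne']
    push_cast
    rw [hlog]
    ring

theorem stmt7_t_sums_bounded (n0 : ℕ) (a : ℝ) :
    ∃ M : ℝ, ∀ n : ℕ, |∑ k ∈ Finset.Ico n0 n,
      (Real.log (1 + a / k) - a * Real.log (1 + 1 / (k:ℝ)))| ≤ M := by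
  set t : ℕ → ℝ := fun k => Real.log (1 + a / k) - a * Real.log (1 + 1 / (k:ℝ)) with ht
  set C : ℝ := 2 * a^2 + 2 * |a| with hC
  have hC0 : 0 ≤ C := by positivity
  set K : ℕ := max 2 (⌈2 * |a|⌉₊ + 1) with hK
  have hbound : ∀ k : ℕ, K ≤ k → |t k| ≤ C / (k:ℝ)^2 := by
    intro k hk
    have hk2 : (2:ℕ) ≤ k := le_trans (le_max_left _ _) hk
    have hkr : (2:ℝ) ≤ k := by exact_mod_cast hk2
    have hkpos : (0:ℝ) < k := by linarith
    have hak : (2 * |a| : ℝ) ≤ k := by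
      have h1 : (⌈2 * |a|⌉₊ : ℝ) ≤ k := by
        have : ⌈2*|a|⌉₊ ≤ k := le_trans (le_trans (Nat.le_succ _) (le_max_right 2 _)) hk
        exact_mod_cast this
      exact le_trans (Nat.le_ceil _) h1
    have h1 : |a / (k:ℝ)| ≤ 1/2 := by
      rw [abs_div, abs_of_pos hkpos, div_le_iff₀ hkpos]; linarith
    have h2 : |1 / (k:ℝ)| ≤ 1/2 := by
      rw [abs_div, abs_of_pos hkpos, abs_one, div_le_iff₀ hkpos]; linarith
    have b1 := stmt7_log_taylor_bound (a / k) h1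
    have b2 := stmt7_log_taylor_bound (1 / (k:ℝ)) h2
    have : t k = (Real.log (1 + a/k) - a/k) - a * (Real.log (1 + 1/(k:ℝ)) - 1/k) := by
      rw [ht]; ring
    rw [this]
    calc |(Real.log (1 + a/k) - a/k) - a * (Real.log (1 + 1/(k:ℝ)) - 1/k)|
        ≤ |Real.log (1 + a/k) - a/k| + |a| * |Real.log (1 + 1/(k:ℝ)) - 1/k| := by
          rw [← abs_mul]; exact abs_sub _ _
      _ ≤ 2 * (a/k)^2 + |a| * (2 * (1/(k:ℝ))^2) := by
          have := mul_le_mul_of_nonneg_left b2 (abs_nonneg a)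
          linarith
      _ = C / (k:ℝ)^2 := by rw [hC]; field_simp
  have hsum : Summable (fun k => |t k|) := by
    rw [← summable_nat_add_iff K]
    apply Summable.of_nonneg_of_le (fun k => abs_nonneg _)
      (fun k => hbound (k + K) (Nat.le_add_left K k))
    have base : Summable (fun k : ℕ => C * (1 / (k:ℝ)^2)) :=
      (Real.summable_one_div_nat_pow.mpr one_lt_two).mul_left C
    have := (summable_nat_add_iff K).mpr base
    exact this.congr (fun k => by rw [mul_one_div])
  refine ⟨∑' k, |t k|, fun n => ?_⟩
  calc |∑ k ∈ Finset.Ico n0 n, t k| ≤ ∑ k ∈ Finset.Ico n0 n, |t k| :=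
        Finset.abs_sum_le_sum_abs _ _
    _ ≤ ∑' k, |t k| := Summable.sum_le_tsum _ (fun i _ => abs_nonneg _) hsum

theorem stmt7P_theta (n0 : ℕ) (a : ℝ) (hn0 : 1 ≤ n0) (ha : -(n0:ℝ) < a) :
    ∃ cP CP : ℝ, 0 < cP ∧ cP ≤ CP ∧
      ∀ n, n0 ≤ n → cP * (n:ℝ)^a ≤ stmt7P n0 a n ∧ stmt7P n0 a n ≤ CP * (n:ℝ)^a := by
  obtain ⟨M, hM⟩ := stmt7_t_sums_bounded n0 a
  have hM0 : 0 ≤ M := by simpa using hM n0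
  set X : ℝ := |a * Real.log n0| + M with hX
  have hX0 : 0 ≤ X := add_nonneg (abs_nonneg _) hM0
  refine ⟨Real.exp (-X), Real.exp X, Real.exp_pos _,
    Real.exp_le_exp.mpr (by linarith), fun n hn => ?_⟩
  have hnpos : (0:ℝ) < n := by
    have : 1 ≤ n := le_trans hn0 hn; exact_mod_cast this
  have hq : |Real.log (stmt7P n0 a n) - a * Real.log n| ≤ X := by
    have h1 := stmt7_log_P n0 a hn0 ha n hn
    have h2 := hM n
    calc |Real.log (stmt7P n0 a n) - a * Real.log n|
        = |(- (a * Real.log n0)) + ∑ k ∈ Finset.Ico n0 n,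
            (Real.log (1 + a / k) - a * Real.log (1 + 1 / (k:ℝ)))| := by
          rw [h1]; congr 1; ring
      _ ≤ |(- (a * Real.log n0))| + _ := abs_add_le _ _
      _ ≤ X := by rw [abs_neg]; exact add_le_add_right h2 _
  have hPn : stmt7P n0 a n
      = Real.exp (Real.log (stmt7P n0 a n) - a * Real.log n) * (n:ℝ)^a := by
    rw [Real.rpow_def_of_pos hnpos, ← Real.exp_add]
    have he : Real.log (stmt7P n0 a n) - a * Real.log n + Real.log (n:ℝ) * a
        = Real.log (stmt7P n0 a n) := by ring
    rw [he, Real.exp_log (stmt7P_pos n0 a hn0 ha n)]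
  have hna : (0:ℝ) ≤ (n:ℝ)^a := Real.rpow_nonneg hnpos.le a
  rw [abs_le] at hq
  constructor
  · rw [hPn]
    exact mul_le_mul_of_nonneg_right (Real.exp_le_exp.mpr hq.1) hna
  · rw [hPn]
    exact mul_le_mul_of_nonneg_right (Real.exp_le_exp.mpr hq.2) hna

/-- Summand in the exact solution of the recursion. -/
noncomputable def stmt7T (n0 : ℕ) (a : ℝ) (g : ℕ → ℝ) (k : ℕ) : ℝ :=
  if n0 ≤ k then g k / (k * stmt7P n0 a (k+1)) else 0

theorem stmt7_f_repr (n0 : ℕ) (a : ℝ) (hn0 : 1 ≤ n0) (ha : -(n0:ℝ) < a) (f g : ℕ → ℝ)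
    (hrec : ∀ n, n0 ≤ n → f (n + 1) = (1 + a / n) * f n + g n / n) :
    ∀ n, n0 ≤ n →
      f n = stmt7P n0 a n * (f n0 + ∑ k ∈ Finset.Ico n0 n, stmt7T n0 a g k) := by
  intro n hn
  induction n, hn using Nat.le_induction with
  | base => simp [stmt7P]
  | succ n hn ih =>
    have hnpos : (0:ℝ) < n := by
      have : 1 ≤ n := le_trans hn0 hn; exact_mod_cast this
    have hPsucc : stmt7P n0 a (n+1) = stmt7P n0 a n * (1 + a / n) :=
      Finset.prod_Ico_succ_top hn _
    have hPpos := stmt7P_pos n0 a hn0 ha n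
    have hfac : (0:ℝ) < 1 + a / n := by
      have : -1 < a / n := by
        rw [lt_div_iff₀ hnpos]
        have h1 : (n0:ℝ) ≤ n := by exact_mod_cast hn
        nlinarith
      linarith
    have hT : stmt7T n0 a g n = g n / (↑n * stmt7P n0 a (n+1)) := if_pos hn
    have hna2 : (0:ℝ) < (n:ℝ) + a := by
      have h1 : (n0:ℝ) ≤ n := by exact_mod_cast hn
      linarith
    have hden : (0:ℝ) < ↑n * stmt7P n0 a n + a * stmt7P n0 a n := by nlinarith
    rw [hrec n hn, ih, Finset.sum_Ico_succ_top hn, hT, hPsucc]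
    field_simp [hden.ne']
    ring

theorem stmt7_rpow_succ_lower (a : ℝ) (k : ℕ) (hk : 1 ≤ k) :
    min 1 ((2:ℝ)^a) * (k:ℝ)^a ≤ ((k:ℝ)+1)^a := by
  have hk1 : (1:ℝ) ≤ k := by exact_mod_cast hk
  have hkpos : (0:ℝ) < k := by linarith
  rcases le_or_gt 0 a with hA | hA
  · have h1 : min 1 ((2:ℝ)^a) ≤ 1 := min_le_left _ _
    have h2 : (k:ℝ)^a ≤ ((k:ℝ)+1)^a := Real.rpow_le_rpow hkpos.le (by linarith) hA
    nlinarith [Real.rpow_nonneg hkpos.le a]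
  · have h1 : min 1 ((2:ℝ)^a) ≤ (2:ℝ)^a := min_le_right _ _
    have h2 : ((2:ℝ)*k)^a ≤ ((k:ℝ)+1)^a :=
      Real.rpow_le_rpow_of_nonpos (by linarith) (by linarith) hA.le
    have h3 : ((2:ℝ)*k)^a = (2:ℝ)^a * (k:ℝ)^a := Real.mul_rpow (by norm_num) hkpos.le
    nlinarith [Real.rpow_nonneg hkpos.le a]

set_option maxHeartbeats 1000000 in
theorem stmt7T_bounded (n0 : ℕ) (a : ℝ) (hn0 : 1 ≤ n0) (ha : -(n0:ℝ) < a)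
    (g : ℕ → ℝ) (hg : ∀ n, n0 ≤ n → 0 < g n)
    (ε : ℝ) (hε : 0 < ε) (C : ℝ) (hC : 0 ≤ C) (K1 : ℕ)
    (hgC : ∀ n : ℕ, K1 ≤ n → g n ≤ C * (n:ℝ)^(a-ε))
    (cP : ℝ) (hcP : 0 < cP)
    (hP : ∀ n, n0 ≤ n → cP * (n:ℝ)^a ≤ stmt7P n0 a n) :
    ∃ S : ℝ, 0 ≤ S ∧ ∀ n : ℕ,
      0 ≤ ∑ k ∈ Finset.Ico n0 n, stmt7T n0 a g k ∧
      ∑ k ∈ Finset.Ico n0 n, stmt7T n0 a g k ≤ S := by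
  have hTnonneg : ∀ k, 0 ≤ stmt7T n0 a g k := by
    intro k
    unfold stmt7T
    split
    · next h =>
      have hkpos : (0:ℝ) < k := by
        have : 1 ≤ k := le_trans hn0 h; exact_mod_cast this
      exact le_of_lt (div_pos (hg k h) (mul_pos hkpos (stmt7P_pos n0 a hn0 ha (k+1))))
    · exact le_rfl
  set m : ℝ := min 1 ((2:ℝ)^a) with hm
  have hmpos : 0 < m := lt_min one_pos (Real.rpow_pos_of_pos two_pos a)
  set C2 : ℝ := C / (cP * m) with hC2
  set K2 : ℕ := max K1 n0 with hK2
  have hbound : ∀ k : ℕ, K2 ≤ k → stmt7T n0 a g k ≤ C2 * (k:ℝ)^(-1-ε) := by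
    intro k hk
    have hkn0 : n0 ≤ k := le_trans (le_max_right _ _) hk
    have hkK1 : K1 ≤ k := le_trans (le_max_left _ _) hk
    have hk1 : 1 ≤ k := le_trans hn0 hkn0
    have hkpos : (0:ℝ) < k := by exact_mod_cast hk1
    have hT : stmt7T n0 a g k = g k / (k * stmt7P n0 a (k+1)) := if_pos hkn0
    have hPl : cP * m * (k:ℝ)^(1+a) ≤ (k:ℝ) * stmt7P n0 a (k+1) := by
      have h1 : cP * ((k:ℝ)+1)^a ≤ stmt7P n0 a (k+1) := by
        have := hP (k+1) (le_trans hkn0 (Nat.le_succ k))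
        push_cast at this ⊢
        exact this
      have h2 := stmt7_rpow_succ_lower a k hk1
      have e1 : (k:ℝ)^(1+a) = (k:ℝ) * (k:ℝ)^a := by
        rw [Real.rpow_add hkpos, Real.rpow_one]
      rw [e1]
      calc cP * m * ((k:ℝ) * (k:ℝ)^a) = (k:ℝ) * (cP * (m * (k:ℝ)^a)) := by ring
        _ ≤ (k:ℝ) * (cP * ((k:ℝ)+1)^a) :=
            mul_le_mul_of_nonneg_left (mul_le_mul_of_nonneg_left h2 hcP.le) hkpos.le
        _ ≤ (k:ℝ) * stmt7P n0 a (k+1) := mul_le_mul_of_nonneg_left h1 hkpos.le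
    have hdenpos : (0:ℝ) < cP * m * (k:ℝ)^(1+a) :=
      mul_pos (mul_pos hcP hmpos) (Real.rpow_pos_of_pos hkpos _)
    have halg : C * (k:ℝ)^(a-ε) / (cP * m * (k:ℝ)^(1+a)) = C2 * (k:ℝ)^(-1-ε) := by
      rw [hC2, mul_div_mul_comm, ← Real.rpow_sub hkpos,
        show a - ε - (1+a) = -1 - ε by ring]
    rw [hT, ← halg]
    exact div_le_div₀ (by positivity) (hgC k hkK1) hdenpos hPl
  have hsum : Summable (stmt7T n0 a g) := by
    rw [← summable_nat_add_iff K2]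
    apply Summable.of_nonneg_of_le (fun k => hTnonneg _)
      (fun k => hbound (k+K2) (Nat.le_add_left _ _))
    exact (summable_nat_add_iff K2).mpr ((Real.summable_nat_rpow.mpr (by linarith)).mul_left C2)
  exact ⟨∑' k, stmt7T n0 a g k, tsum_nonneg hTnonneg,
    fun n => ⟨Finset.sum_nonneg (fun i _ => hTnonneg i),
      Summable.sum_le_tsum _ (fun i _ => hTnonneg i) hsum⟩⟩

end Stmt7Aux

/-- If `g(n) = O(n^{a-ε})` for some `ε > 0`, then `f(n) = Θ(n^a)`: there are constants
`0 < c1 ≤ c2` and `N` with `c1·n^a ≤ f(n) ≤ c2·n^a` for all `n ≥ N`. -/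
theorem stmt_7 (n0 : ℕ) (hn0 : 1 ≤ n0) (a : ℝ) (ha : -(n0 : ℝ) < a)
    (f g : ℕ → ℝ)
    (hf : ∀ n, n0 ≤ n → 0 < f n) (hg : ∀ n, n0 ≤ n → 0 < g n)
    (hrec : ∀ n, n0 ≤ n → f (n + 1) = (1 + a / n) * f n + g n / n)
    (ε : ℝ) (hε : 0 < ε)
    (hO : (fun n : ℕ => g n) =O[atTop] fun n : ℕ => (n : ℝ) ^ (a - ε)) :
    ∃ c1 c2 : ℝ, ∃ N : ℕ, 0 < c1 ∧ c1 ≤ c2 ∧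
      ∀ n, N ≤ n → c1 * (n : ℝ) ^ a ≤ f n ∧ f n ≤ c2 * (n : ℝ) ^ a := by
  -- extract a pointwise bound on g
  obtain ⟨C, hCpos, hCO⟩ := hO.exists_pos
  rw [Asymptotics.isBigOWith_iff] at hCO
  obtain ⟨K1, hK1⟩ := Filter.eventually_atTop.mp hCO
  have hgC : ∀ n : ℕ, K1 + 1 ≤ n → g n ≤ C * (n:ℝ)^(a-ε) := by
    intro n hn
    have h1 := hK1 n (le_trans (Nat.le_succ K1) hn)
    have hnn : (0:ℝ) ≤ (n:ℝ) := Nat.cast_nonneg n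
    have h2 : ‖(n:ℝ)^(a-ε)‖ = (n:ℝ)^(a-ε) := by
      rw [Real.norm_eq_abs, abs_of_nonneg (Real.rpow_nonneg hnn _)]
    calc g n ≤ ‖g n‖ := le_abs_self _
      _ ≤ C * ‖(n:ℝ)^(a-ε)‖ := h1
      _ = C * (n:ℝ)^(a-ε) := by rw [h2]
  obtain ⟨cP, CP, hcP, hcPCP, hPbnd⟩ := stmt7P_theta n0 a hn0 ha
  obtain ⟨S, hS0, hSbnd⟩ := stmt7T_bounded n0 a hn0 ha g hg ε hε C hCpos.le (K1+1) hgC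
    cP hcP (fun n hn => (hPbnd n hn).1)
  have hrepr := stmt7_f_repr n0 a hn0 ha f g hrec
  have hfn0 := hf n0 le_rfl
  refine ⟨cP * f n0, CP * (f n0 + S), n0, mul_pos hcP hfn0,
    mul_le_mul hcPCP (by linarith) hfn0.le (le_trans hcP.le hcPCP), fun n hn => ?_⟩
  have hnpos : (0:ℝ) < n := by
    have : 1 ≤ n := le_trans hn0 hn; exact_mod_cast this
  have hna : (0:ℝ) ≤ (n:ℝ)^a := Real.rpow_nonneg hnpos.le a
  obtain ⟨hSg0, hSgS⟩ := hSbnd n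
  obtain ⟨hP1, hP2⟩ := hPbnd n hn
  have hPpos := stmt7P_pos n0 a hn0 ha n
  rw [hrepr n hn]
  constructor
  · calc cP * f n0 * (n:ℝ)^a = (cP * (n:ℝ)^a) * f n0 := by ring
      _ ≤ stmt7P n0 a n * (f n0 + ∑ k ∈ Finset.Ico n0 n, stmt7T n0 a g k) :=
        mul_le_mul hP1 (by linarith) hfn0.le hPpos.le
  · calc stmt7P n0 a n * (f n0 + ∑ k ∈ Finset.Ico n0 n, stmt7T n0 a g k)
        ≤ (CP * (n:ℝ)^a) * (f n0 + S) := by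
          apply mul_le_mul hP2 (by linarith) (by linarith) _
          exact le_trans hPpos.le hP2
      _ = CP * (f n0 + S) * (n:ℝ)^a := by ring
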